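/- Let (R, m) be a commutative local ring and M a flat R-module. If S is a subset of M whose image in M/mM is linearly independent over the residue field R/m, then S is linearly independent over R. -/

import Mathlib

open LinearMap Function Submodule TensorProduct Finsupp

universe u v

section Core

variable {R : Type u} [CommRing R]
variable {M : Type u} [AddCommGroup M] [Module R M]
variable {N : Type v} [AddCommGroup N] [Module R N]
variable {ι : Type} [Fintype ι] {m : ι → M} {n : ι → N}

/-- Universe-polymorphic variant of `TensorProduct.vanishesTrivially_of_sum_tmul_eq_zero`. -/
theorem my_vanishes (hm : Submodule.span R (Set.range m) = ⊤)
    (hmn : ∑ i, m i ⊗ₜ n i = (0 : M ⊗[R] N)) :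
    ∃ (κ : Type (max u v)) (_ : Fintype κ) (a : ι → κ → R) (y : κ → N),
      (∀ i, n i = ∑ j, a i j • y j) ∧ ∀ j, ∑ i, a i j • m i = 0 := by
  set G : (ι →₀ R) →ₗ[R] M := Finsupp.linearCombination R m with hG
  have G_basis_eq (i : ι) : G (Finsupp.single i 1) = m i := by simp [hG]
  have G_surjective : Surjective G := by
    apply LinearMap.range_eq_top.mp
    apply top_le_iff.mp
    rw [← hm]
    apply Submodule.span_le.mpr
    rintro _ ⟨i, rfl⟩
    use Finsupp.single i 1, G_basis_eq i
  set en : (ι →₀ R) ⊗[R] N := ∑ i, Finsupp.single i 1 ⊗ₜ n i with hen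
  have en_mem_ker : en ∈ ker (rTensor N G) := by simp [hen, G_basis_eq, hmn]
  have exact_ker_subtype : Exact (ker G).subtype G := G.exact_subtype_ker_map
  have exact_rTensor_ker_subtype : Exact (rTensor N (ker G).subtype) (rTensor N G) :=
    rTensor_exact (M := ↥(ker G)) N exact_ker_subtype G_surjective
  have en_mem_range : en ∈ range (rTensor N (ker G).subtype) :=
    exact_rTensor_ker_subtype.linearMap_ker_eq ▸ en_mem_ker
  obtain ⟨kn, hkn⟩ := en_mem_range
  obtain ⟨ma, rfl : kn = ∑ kj ∈ ma, kj.1 ⊗ₜ[R] kj.2⟩ := exists_finset kn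
  refine ⟨↑↑ma, FinsetCoe.fintype ma,
    fun i ⟨⟨kj, _⟩, _⟩ ↦ (kj : ι →₀ R) i, fun ⟨⟨_, yj⟩, _⟩ ↦ yj, ?_, ?_⟩
  · intro i
    classical
    apply_fun finsuppScalarLeft R N ι at hkn
    apply_fun (· i) at hkn
    symm at hkn
    simp only [map_sum, finsuppScalarLeft_apply_tmul, zero_smul, Finsupp.single_zero,
      Finsupp.sum_single_index, one_smul, Finsupp.finset_sum_apply, Finsupp.single_apply,
      Finset.sum_ite_eq', Finset.mem_univ, ↓reduceIte, rTensor_tmul, coe_subtype,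
      Finsupp.sum_apply, Finsupp.sum_ite_eq', Finsupp.mem_support_iff, ne_eq, ite_not,
      en] at hkn
    simp only [Finset.univ_eq_attach, Finset.sum_attach ma (fun x ↦ (x.1 : ι →₀ R) i • x.2)]
    convert hkn using 2 with x _
    split
    · next h'x => rw [h'x, zero_smul]
    · rfl
  · rintro ⟨⟨⟨k, hk⟩, _⟩, _⟩
    simpa only [hG, linearCombination_apply, zero_smul, implies_true, Finsupp.sum_fintype] using
      mem_ker.mp hk

end Core

section Trivial

variable {R : Type u} [CommRing R]
variable {M : Type v} [AddCommGroup M] [Module R M] [Module.Flat R M]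

/-- Universe-polymorphic equational criterion for flatness (forward direction). -/
theorem my_trivial_relation {n : ℕ} {f : Fin n → R} {x : Fin n → M}
    (h : ∑ i, f i • x i = 0) :
    ∃ (κ : Type (max u v)) (_ : Fintype κ) (a : Fin n → κ → R) (y : κ → M),
      (∀ i, x i = ∑ j, a i j • y j) ∧ ∀ j, ∑ i, f i * a i j = 0 := by
  classical
  set P : Submodule R R := Submodule.span R (Set.range f) with hP
  have mem_P (i : Fin n) : f i ∈ P := Submodule.subset_span ⟨i, rfl⟩
  set m' : Fin n → P := Subtype.coind f mem_P with m'_eq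
  have hm' : Submodule.span R (Set.range m') = ⊤ := by
    apply Submodule.map_injective_of_injective (Submodule.injective_subtype P)
    rw [Submodule.map_span, Submodule.map_top, Submodule.range_subtype, Submodule.coe_subtype,
      ← Set.range_comp]
    rfl
  have hinj : Function.Injective (rTensor M P.subtype) :=
    Module.Flat.rTensor_preserves_injective_linearMap P.subtype (Submodule.injective_subtype P)
  have hmn : ∑ i, m' i ⊗ₜ x i = (0 : P ⊗[R] M) := by
    apply hinj
    rw [map_sum, map_zero]
    simp only [rTensor_tmul, Submodule.coe_subtype, m'_eq, Subtype.coind_coe]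
    apply (TensorProduct.lid R M).injective
    simpa [map_sum] using h
  obtain ⟨κ, hκ, a, y, h1, h2⟩ := my_vanishes hm' hmn
  refine ⟨κ, hκ, a, y, h1, fun j => ?_⟩
  have h4 := congrArg (P.subtype) (h2 j)
  simp only [map_sum, map_smul, Submodule.coe_subtype, smul_eq_mul, m'_eq,
    Subtype.coind_coe, map_zero] at h4
  rw [Finset.sum_congr rfl (fun i _ => mul_comm (f i) (a i j))]
  exact h4

end Trivial

section K

variable {A : Type*} [CommRing A] {V : Type*} [AddCommGroup V] [Module A V]

theorem my_linIndep_add_smul {n : ℕ} {v : Fin (n + 1) → V}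
    (hv : LinearIndependent A v) (c : Fin n → A) :
    LinearIndependent A (fun i : Fin n => v i.castSucc + c i • v (Fin.last n)) := by
  rw [Fintype.linearIndependent_iff] at hv ⊢
  intro d hd
  have key : ∀ i, (Fin.lastCases (∑ j, d j * c j) d : Fin (n + 1) → A) i = 0 := by
    apply hv
    rw [Fin.sum_univ_castSucc]
    simp only [Fin.lastCases_castSucc, Fin.lastCases_last]
    rw [Finset.sum_smul]
    rw [← hd]
    rw [← Finset.sum_add_distrib]
    congr 1
    funext i
    rw [smul_add, mul_smul]
  intro i
  have := key i.castSucc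
  simpa using this
end K

section MainAux

variable {R : Type u} [CommRing R] [IsLocalRing R]
variable {M : Type v} [AddCommGroup M] [Module R M] [Module.Flat R M]

theorem my_main_aux : ∀ (n : ℕ) (w : Fin n → M),
    LinearIndependent (R ⧸ IsLocalRing.maximalIdeal R)
      (fun i : Fin n => (Submodule.Quotient.mk (w i) :
        M ⧸ (IsLocalRing.maximalIdeal R) • (⊤ : Submodule R M))) →
    ∀ g : Fin n → R, ∑ i, g i • w i = 0 → ∀ i, g i = 0
  | 0 => fun _ _ _ _ i => i.elim0
  | (n + 1) => by
    intro w hw g hg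
    classical
    obtain ⟨κ, _, a, y, hxy, haf⟩ := my_trivial_relation hg
    have hlast : (Submodule.Quotient.mk (w (Fin.last n)) :
        M ⧸ (IsLocalRing.maximalIdeal R) • (⊤ : Submodule R M)) ≠ 0 := hw.ne_zero (Fin.last n)
    have hwlast : w (Fin.last n) ∉ (IsLocalRing.maximalIdeal R) • (⊤ : Submodule R M) :=
      fun hmem => hlast ((Submodule.Quotient.mk_eq_zero _).mpr hmem)
    have hex : ∃ j₀, a (Fin.last n) j₀ ∉ IsLocalRing.maximalIdeal R := by
      by_contra h'
      push_neg at h'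
      apply hwlast
      rw [hxy (Fin.last n)]
      exact Submodule.sum_mem _ fun j _ => Submodule.smul_mem_smul (h' j) Submodule.mem_top
    obtain ⟨j₀, hj₀⟩ := hex
    have hu' : IsUnit (a (Fin.last n) j₀) := by
      by_contra h'
      exact hj₀ ((IsLocalRing.mem_maximalIdeal _).mpr h')
    obtain ⟨u, hu⟩ := hu'
    set c : Fin n → R := fun i => -(a i.castSucc j₀ * ↑u⁻¹) with hc
    have h1 : g (Fin.last n) * a (Fin.last n) j₀ =
        -∑ i : Fin n, g i.castSucc * a i.castSucc j₀ := by
      have h0 := haf j₀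
      rw [Fin.sum_univ_castSucc] at h0
      exact eq_neg_of_add_eq_zero_right h0
    have hglast : g (Fin.last n) = ∑ i, g i.castSucc * c i := by
      have h2 : g (Fin.last n) = (g (Fin.last n) * a (Fin.last n) j₀) * ↑u⁻¹ := by
        rw [mul_assoc, ← hu, Units.mul_inv, mul_one]
      rw [h2, h1, neg_mul, Finset.sum_mul, ← Finset.sum_neg_distrib]
      refine Finset.sum_congr rfl fun i _ => ?_
      simp only [hc]
      ring
    set w' : Fin n → M := fun i => w i.castSucc + c i • w (Fin.last n) with hw'def
    have hw' : LinearIndependent (R ⧸ IsLocalRing.maximalIdeal R)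
        (fun i : Fin n => (Submodule.Quotient.mk (w' i) :
          M ⧸ (IsLocalRing.maximalIdeal R) • (⊤ : Submodule R M))) := by
      have := my_linIndep_add_smul hw (fun i => Ideal.Quotient.mk _ (c i))
      convert this using 1
      all_goals rfl
    have hrel : ∑ i : Fin n, g i.castSucc • w' i = 0 := by
      simp only [hw'def, smul_add, smul_smul]
      rw [Finset.sum_add_distrib, ← Finset.sum_smul, ← hglast]
      rw [← Fin.sum_univ_castSucc (f := fun i => g i • w i)]
      exact hg
    have hzero := my_main_aux n w' hw' (fun i => g i.castSucc) hrel
    intro i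
    refine Fin.lastCases ?_ ?_ i
    · rw [hglast]
      simp [hzero]
    · exact hzero

end MainAux

/-- Over a local ring, a subset of a flat module whose image in `M/mM` is linearly
independent over the residue field is linearly independent over `R`. -/
theorem linearIndependent_of_flat_of_quotient_linearIndependent
    (R M : Type*) [CommRing R] [IsLocalRing R] [AddCommGroup M] [Module R M]
    [Module.Flat R M] (S : Set M)
    (h : LinearIndependent (R ⧸ IsLocalRing.maximalIdeal R)
      (fun s : S => (Submodule.Quotient.mk (s : M) :
        M ⧸ (IsLocalRing.maximalIdeal R) • (⊤ : Submodule R M)))) :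
    LinearIndependent R ((↑) : S → M) := by
  classical
  rw [linearIndependent_iff']
  intro s g hrel i hi
  set e := s.equivFin with he
  set f : Fin s.card → S := fun j => (e.symm j : S) with hf
  have hfinj : Function.Injective f :=
    Subtype.val_injective.comp e.symm.injective
  set w : Fin s.card → M := fun j => (f j : M) with hwdef
  have hw : LinearIndependent (R ⧸ IsLocalRing.maximalIdeal R)
      (fun j : Fin s.card => (Submodule.Quotient.mk (w j) :
        M ⧸ (IsLocalRing.maximalIdeal R) • (⊤ : Submodule R M))) :=
    h.comp f hfinj
  have hsum : ∑ j : Fin s.card, (g (f j)) • w j = 0 := by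
    have h1 : ∑ j : Fin s.card, g (f j) • w j =
        ∑ x ∈ s.attach, g (x : S) • ((x : S) : M) :=
      Equiv.sum_comp e.symm (fun x : {x // x ∈ s} => g (x : S) • ((x : S) : M))
    rw [h1, Finset.sum_attach s (fun i => g i • (i : M)), hrel]
  have := my_main_aux s.card w hw (fun j => g (f j)) hsum (e ⟨i, hi⟩)
  simpa [hf] using this
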